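/- Let c be a closure operator on subsets of a type α and define M-dividing independence by A ⫶M_C B iff for every C' with C ⊆ C' ⊆ c(B∪C) one has c(A∪C') ∩ c(B∪C') = c(C'). Then for all closed sets A and B: (A, B) is a modular pair, i.e., for every closed C ⊆ B one has c(A∪C) ∩ B = c(C ∪ (A∩B)), if and only if A ⫶M_{A∩B} B. -/
import Mathlib


/-- M-dividing independence relative to a closure operator `c`. -/
def mDiv {α : Type*} (c : Set α → Set α) (A C B : Set α) : Prop :=
  ∀ C' : Set α, C ⊆ C' → C' ⊆ c (B ∪ C) → c (A ∪ C') ∩ c (B ∪ C') = c C'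

/-- Exercise on modular pairs, part (i): for closed sets `A`, `B`,
`(A, B)` is a modular pair iff `A ⫶M_{A∩B} B`. -/
theorem stmt_15 {α : Type*} (c : Set α → Set α)
    (cmono : ∀ A B : Set α, A ⊆ B → c A ⊆ c B)
    (cext : ∀ A : Set α, A ⊆ c A)
    (cidem : ∀ A : Set α, c (c A) = c A)
    (A B : Set α) (hA : c A = A) (hB : c B = B) :
    (∀ C : Set α, c C = C → C ⊆ B → c (A ∪ C) ∩ B = c (C ∪ (A ∩ B))) ↔
    mDiv c A (A ∩ B) B := by
  have hBA : B ∪ A ∩ B = B := Set.union_eq_self_of_subset_right Set.inter_subset_right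
  constructor
  · intro hmod C' hCC' hC'B
    rw [hBA, hB] at hC'B
    have hBC' : B ∪ C' = B := Set.union_eq_self_of_subset_right hC'B
    -- c(A ∪ C') = c(A ∪ c C')
    have hkey : c (A ∪ C') = c (A ∪ c C') := by
      apply Set.Subset.antisymm
      · exact cmono _ _ (Set.union_subset_union_right _ (cext _))
      · have h1 : A ∪ c C' ⊆ c (A ∪ C') :=
          Set.union_subset ((cext _).trans (cmono _ _ Set.subset_union_left))
            (cmono _ _ Set.subset_union_right)
        calc c (A ∪ c C') ⊆ c (c (A ∪ C')) := cmono _ _ h1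
          _ = c (A ∪ C') := cidem _
    have hcC'B : c C' ⊆ B := hB ▸ cmono _ _ hC'B
    have := hmod (c C') (cidem C') hcC'B
    rw [hBC', hB, hkey, this]
    have : c C' ∪ A ∩ B = c C' :=
      Set.union_eq_self_of_subset_right (hCC'.trans (cext _))
    rw [this, cidem]
  · intro hdiv C hC hCB
    have hC' : A ∩ B ⊆ C ∪ A ∩ B := Set.subset_union_right
    have hC'B : C ∪ A ∩ B ⊆ c (B ∪ A ∩ B) := by
      rw [hBA, hB]
      exact Set.union_subset hCB Set.inter_subset_right
    have := hdiv (C ∪ A ∩ B) hC' hC'B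
    have hAU : A ∪ (C ∪ A ∩ B) = A ∪ C := by
      rw [Set.union_comm C, ← Set.union_assoc,
        Set.union_eq_self_of_subset_right Set.inter_subset_left]
    have hBU : B ∪ (C ∪ A ∩ B) = B := by
      rw [← Set.union_assoc, Set.union_eq_self_of_subset_right hCB, hBA]
    rw [hAU, hBU, hB] at this
    exact this
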